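/- arXiv:1008.3786 — 6 statements merged into one kernel-verified Lean document; each statement's English description precedes it below -/
import Mathlib

section
/- Let R, M, X be finite sets with M overlapping R, X ∩ R ≠ ∅, |R| ≤ |X| ≤ |M|, and suppose X does not overlap R. Then X overlaps M or X = M. (Dahlhaus's key lemma: any set intersecting R whose size lies between |R| and |Max(R)| overlaps R or Max(R).) -/
def Overlaps {α : Type*} [DecidableEq α] (A B : Finset α) : Prop :=
  (A ∩ B).Nonempty ∧ (A \ B).Nonempty ∧ (B \ A).Nonempty

theorem stmt4 {α : Type*} [DecidableEq α] (R M X : Finset α)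
    (hMR : Overlaps M R)
    (hXR : X ∩ R ≠ ∅)
    (h1 : R.card ≤ X.card) (h2 : X.card ≤ M.card)
    (hnot : ¬ Overlaps X R) :
    Overlaps X M ∨ X = M := by
  obtain ⟨hMRi, hMRd, hRMd⟩ := hMR
  have hXRi : (X ∩ R).Nonempty := Finset.nonempty_iff_ne_empty.mpr hXR
  by_cases hXd : (X \ R).Nonempty
  · -- then R \ X must be empty
    have hRX : R ⊆ X := by
      by_contra h
      exact hnot ⟨hXRi, hXd, Finset.sdiff_nonempty.mpr h⟩
    -- R ⊆ X, so X ∩ M ⊇ R ∩ M nonempty, X \ M ⊇ R \ M nonempty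
    by_cases hMX : (M \ X).Nonempty
    · left
      refine ⟨?_, ?_, hMX⟩
      · obtain ⟨a, ha⟩ := hMRi
        simp only [Finset.mem_inter] at ha
        exact ⟨a, Finset.mem_inter.mpr ⟨hRX ha.2, ha.1⟩⟩
      · obtain ⟨a, ha⟩ := hRMd
        simp only [Finset.mem_sdiff] at ha
        exact ⟨a, Finset.mem_sdiff.mpr ⟨hRX ha.1, ha.2⟩⟩
    · right
      have hMsub : M ⊆ X := by
        intro a haM
        by_contra h
        exact hMX ⟨a, Finset.mem_sdiff.mpr ⟨haM, h⟩⟩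
      exact (Finset.eq_of_subset_of_card_le hMsub h2).symm
  · -- X ⊆ R, so X = R by card
    have hXsub : X ⊆ R := by
      intro a haX
      by_contra h
      exact hXd ⟨a, Finset.mem_sdiff.mpr ⟨haX, h⟩⟩
    have hXR' : X = R := Finset.eq_of_subset_of_card_le hXsub h1
    subst hXR'
    left
    refine ⟨?_, hRMd, hMRd⟩
    obtain ⟨a, ha⟩ := hMRi
    simp only [Finset.mem_inter] at ha
    exact ⟨a, Finset.mem_inter.mpr ⟨ha.2, ha.1⟩⟩
end

section
/- The unions of distinct overlap classes form a laminar family: if K1 and K2 are distinct overlap classes with unions U1 and U2, then U1 ⊆ U2, or U2 ⊆ U1, or U1 ∩ U2 = ∅. -/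
def OverlapRel {α : Type*} [DecidableEq α] (S : Finset (Finset α))
    (A B : Finset α) : Prop :=
  A ∈ S ∧ B ∈ S ∧ Overlaps A B

def OverlapClass {α : Type*} [DecidableEq α] (S : Finset (Finset α))
    (B : Finset α) : Set (Finset α) :=
  {X | X ∈ S ∧ Relation.EqvGen (OverlapRel S) B X}

/-- Classes are equal if some members overlap. -/
lemma class_eq_of_overlap {α : Type*} [DecidableEq α] (S : Finset (Finset α))
    {B1 B2 A B : Finset α} (hA : A ∈ OverlapClass S B1) (hB : B ∈ OverlapClass S B2)
    (hov : Overlaps A B) : OverlapClass S B1 = OverlapClass S B2 := by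
  obtain ⟨hAS, hA1⟩ := hA
  obtain ⟨hBS, hB2⟩ := hB
  have key : Relation.EqvGen (OverlapRel S) B1 B2 :=
    ((hA1.trans _ _ _ (Relation.EqvGen.rel _ _ ⟨hAS, hBS, hov⟩)).trans _ _ _ hB2.symm)
  ext X
  constructor
  · rintro ⟨hXS, hX⟩; exact ⟨hXS, (key.symm _ _).trans _ _ _ hX⟩
  · rintro ⟨hXS, hX⟩; exact ⟨hXS, key.trans _ _ _ hX⟩

/-- Propagation along overlap chains. -/
lemma chain_subset {α : Type*} [DecidableEq α] (S : Finset (Finset α))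
    {B1 B2 : Finset α} (hB1 : B1 ∈ S) (hB2 : B2 ∈ S)
    (hne : OverlapClass S B1 ≠ OverlapClass S B2)
    {A0 B0 : Finset α} (hA0 : A0 ∈ OverlapClass S B1) (hB0 : B0 ∈ OverlapClass S B2)
    (hsub : A0 ⊆ B0) {A : Finset α} (hA : A ∈ OverlapClass S B1) : A ⊆ B0 := by
  have hc1 : B1 ∈ OverlapClass S B1 := ⟨hB1, Relation.EqvGen.refl _⟩
  -- A0 ~ A
  have hconn : Relation.EqvGen (OverlapRel S) A0 A :=
    (hA0.2.symm).trans _ _ _ hA.2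
  -- key induction
  have main : ∀ X Y : Finset α, Relation.EqvGen (OverlapRel S) X Y →
      X = Y ∨ (X ∈ S ∧ Y ∈ S ∧ Relation.EqvGen (OverlapRel S) X Y ∧
        (Relation.EqvGen (OverlapRel S) A0 X → (X ⊆ B0 ↔ Y ⊆ B0))) := by
    intro X Y h
    induction h with
    | refl X => exact Or.inl rfl
    | symm X Y h ih =>
      rcases ih with rfl | ⟨hXS, hYS, hXY, hiff⟩
      · exact Or.inl rfl
      · refine Or.inr ⟨hYS, hXS, hXY.symm, fun hAY => ?_⟩
        exact (hiff (hAY.trans _ _ _ hXY.symm)).symm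
    | trans X Y Z hXY hYZ ih1 ih2 =>
      rcases ih1 with rfl | ⟨hXS, hYS, hXY', hiff1⟩
      · exact ih2
      · rcases ih2 with rfl | ⟨hYS', hZS, hYZ', hiff2⟩
        · exact Or.inr ⟨hXS, hYS, hXY', hiff1⟩
        · refine Or.inr ⟨hXS, hZS, hXY'.trans _ _ _ hYZ', fun hAX => ?_⟩
          exact (hiff1 hAX).trans (hiff2 (hAX.trans _ _ _ hXY'))
    | rel X Y h =>
      obtain ⟨hXS, hYS, hov⟩ := h
      refine Or.inr ⟨hXS, hYS, Relation.EqvGen.rel _ _ ⟨hXS, hYS, hov⟩, fun hAX => ?_⟩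
      -- X, Y ∈ class B1
      have hXK : X ∈ OverlapClass S B1 := ⟨hXS, hA0.2.trans _ _ _ hAX⟩
      have hYK : Y ∈ OverlapClass S B1 :=
        ⟨hYS, hXK.2.trans _ _ _ (Relation.EqvGen.rel _ _ ⟨hXS, hYS, hov⟩)⟩
      have hXno : ¬ Overlaps X B0 := fun hc => hne (class_eq_of_overlap S hXK hB0 hc)
      have hYno : ¬ Overlaps Y B0 := fun hc => hne (class_eq_of_overlap S hYK hB0 hc)
      have step : ∀ U V : Finset α, Overlaps U V → ¬ Overlaps U B0 → ¬ Overlaps V B0 →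
          U ⊆ B0 → V ⊆ B0 := by
        intro U V huv hU hV hUB
        have hVB0 : (V ∩ B0).Nonempty := by
          obtain ⟨x, hx⟩ := huv.1
          simp only [Finset.mem_inter] at hx
          exact ⟨x, Finset.mem_inter.mpr ⟨hx.2, hUB hx.1⟩⟩
        by_contra hnsub
        obtain ⟨y, hy⟩ := Finset.not_subset.mp hnsub
        apply hV
        refine ⟨hVB0, ⟨y, Finset.mem_sdiff.mpr hy⟩, ?_⟩
        -- need (B0 \ V).Nonempty : else B0 ⊆ V, then U ⊆ V contradicting overlap
        by_contra hB0V
        have : B0 ⊆ V := by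
          intro z hz
          by_contra hzV
          exact hB0V ⟨z, Finset.mem_sdiff.mpr ⟨hz, hzV⟩⟩
        obtain ⟨w, hw⟩ := huv.2.1
        simp only [Finset.mem_sdiff] at hw
        exact hw.2 (this (hUB hw.1))
      exact ⟨fun h => step X Y hov hXno hYno h,
             fun h => step Y X ⟨by rw [Finset.inter_comm]; exact hov.1, hov.2.2, hov.2.1⟩ hYno hXno h⟩
  rcases main A0 A hconn with rfl | ⟨_, _, _, hiff⟩
  · exact hsub
  · exact (hiff (Relation.EqvGen.refl _)).mp hsub

/-- Unions of distinct overlap classes form a laminar family. -/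
theorem stmt8 {α : Type*} [DecidableEq α] (S : Finset (Finset α))
    (K1 K2 : Set (Finset α))
    (h1 : ∃ B ∈ S, K1 = OverlapClass S B)
    (h2 : ∃ B ∈ S, K2 = OverlapClass S B)
    (hne : K1 ≠ K2) :
    (⋃ A ∈ K1, (A : Set α)) ⊆ (⋃ A ∈ K2, (A : Set α)) ∨
    (⋃ A ∈ K2, (A : Set α)) ⊆ (⋃ A ∈ K1, (A : Set α)) ∨
    (⋃ A ∈ K1, (A : Set α)) ∩ (⋃ A ∈ K2, (A : Set α)) = ∅ := by
  obtain ⟨B1, hB1, rfl⟩ := h1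
  obtain ⟨B2, hB2, rfl⟩ := h2
  by_cases hdisj : (⋃ A ∈ OverlapClass S B1, (A : Set α)) ∩
      (⋃ A ∈ OverlapClass S B2, (A : Set α)) = ∅
  · exact Or.inr (Or.inr hdisj)
  · obtain ⟨x, hx1, hx2⟩ := Set.nonempty_iff_ne_empty.mpr hdisj
    simp only [Set.mem_iUnion] at hx1 hx2
    obtain ⟨A0, hA0, hxA0⟩ := hx1
    obtain ⟨B0, hB0, hxB0⟩ := hx2
    have hxA0' : x ∈ A0 := by exact_mod_cast hxA0
    have hxB0' : x ∈ B0 := by exact_mod_cast hxB0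
    have hnov : ¬ Overlaps A0 B0 := fun hc => hne (class_eq_of_overlap S hA0 hB0 hc)
    have hinter : (A0 ∩ B0).Nonempty := ⟨x, Finset.mem_inter.mpr ⟨hxA0', hxB0'⟩⟩
    have hcases : A0 ⊆ B0 ∨ B0 ⊆ A0 := by
      by_contra hc
      push_neg at hc
      obtain ⟨y, hy1, hy2⟩ := Finset.not_subset.mp hc.1
      obtain ⟨z, hz1, hz2⟩ := Finset.not_subset.mp hc.2
      exact hnov ⟨hinter, ⟨y, Finset.mem_sdiff.mpr ⟨hy1, hy2⟩⟩,
        ⟨z, Finset.mem_sdiff.mpr ⟨hz1, hz2⟩⟩⟩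
    rcases hcases with hsub | hsub
    · left
      intro w hw
      simp only [Set.mem_iUnion] at hw ⊢
      obtain ⟨A, hA, hwA⟩ := hw
      have := chain_subset S hB1 hB2 hne hA0 hB0 hsub hA
      exact ⟨B0, hB0, by exact_mod_cast this (by exact_mod_cast hwA)⟩
    · right; left
      intro w hw
      simp only [Set.mem_iUnion] at hw ⊢
      obtain ⟨B, hB, hwB⟩ := hw
      have := chain_subset S hB2 hB1 (Ne.symm hne) hB0 hA0 hsub hB
      exact ⟨A0, hA0, by exact_mod_cast this (by exact_mod_cast hwB)⟩
end

section
/- If two sets A and B overlap and both are intervals of a linear order on C, then A ∩ B, A \ B, and B \ A are all intervals of that order, and moreover A ∩ B lies between A \ B and B \ A: either every element of A \ B precedes every element of A ∩ B which precedes every element of B \ A, or the reverse. -/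
def IsIntervalOf {α : Type*} (r : α → α → Prop) (S : Finset α) : Prop :=
  ∀ x y z, r x y → r y z → x ∈ S → z ∈ S → y ∈ S

lemma sdiff_interval {α : Type*} [DecidableEq α] (r : α → α → Prop)
    (hr : IsLinearOrder α r) (A B : Finset α)
    (hA : IsIntervalOf r A) (hB : IsIntervalOf r B)
    (b0 : α) (hb0 : b0 ∈ B \ A) : IsIntervalOf r (A \ B) := by
  have htot := hr.toTotal.total
  obtain ⟨hb0B, hb0A⟩ := Finset.mem_sdiff.1 hb0
  intro x y z hxy hyz hx hz
  obtain ⟨hxA, hxB⟩ := Finset.mem_sdiff.1 hx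
  obtain ⟨hzA, hzB⟩ := Finset.mem_sdiff.1 hz
  refine Finset.mem_sdiff.2 ⟨hA x y z hxy hyz hxA hzA, fun hyB => ?_⟩
  rcases htot b0 x with h1 | h1
  · exact hxB (hB b0 x y h1 hxy hb0B hyB)
  · rcases htot z b0 with h2 | h2
    · exact hzB (hB y z b0 hyz h2 hyB hb0B)
    · exact hb0A (hA x b0 z h1 h2 hxA hzA)

lemma key {α : Type*} [DecidableEq α] (r : α → α → Prop)
    (hr : IsLinearOrder α r) (A B : Finset α)
    (hA : IsIntervalOf r A) (hB : IsIntervalOf r B)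
    (a0 b0 : α) (ha0 : a0 ∈ A \ B) (hb0 : b0 ∈ B \ A) (hab : r a0 b0) :
    ∀ a ∈ A \ B, ∀ x ∈ A ∩ B, ∀ b ∈ B \ A, r a x ∧ r x b := by
  have htot := hr.toTotal.total
  obtain ⟨ha0A, ha0B⟩ := Finset.mem_sdiff.1 ha0
  obtain ⟨hb0B, hb0A⟩ := Finset.mem_sdiff.1 hb0
  have step1 : ∀ x ∈ A ∩ B, r a0 x ∧ r x b0 := by
    intro x hx
    obtain ⟨hxA, hxB⟩ := Finset.mem_inter.1 hx
    constructor
    · rcases htot a0 x with h | h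
      · exact h
      · exact absurd (hB x a0 b0 h hab hxB hb0B) ha0B
    · rcases htot x b0 with h | h
      · exact h
      · exact absurd (hA a0 b0 x hab h ha0A hxA) hb0A
  intro a ha x hx b hb
  obtain ⟨haA, haB⟩ := Finset.mem_sdiff.1 ha
  obtain ⟨hbB, hbA⟩ := Finset.mem_sdiff.1 hb
  obtain ⟨hxA, hxB⟩ := Finset.mem_inter.1 hx
  have hax : r a x := by
    rcases htot a x with h | h
    · exact h
    · rcases htot a b0 with h2 | h2
      · exact absurd (hB x a b0 h h2 hxB hb0B) haB
      · exact absurd (hA x b0 a (step1 x hx).2 h2 hxA haA) hb0A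
  refine ⟨hax, ?_⟩
  rcases htot x b with h | h
  · exact h
  · rcases htot a0 b with h2 | h2
    · exact absurd (hA a0 b x h2 h ha0A hxA) hbA
    · exact absurd (hB b a0 x h2 (step1 x hx).1 hbB hxB) ha0B

/-- Two overlapping intervals force the layout `(A\B)(A∩B)(B\A)` or its reversal. -/
theorem stmt12 {α : Type*} [DecidableEq α] (r : α → α → Prop)
    (hr : IsLinearOrder α r) (A B : Finset α) (hAB : Overlaps A B)
    (hA : IsIntervalOf r A) (hB : IsIntervalOf r B) :
    IsIntervalOf r (A ∩ B) ∧ IsIntervalOf r (A \ B) ∧ IsIntervalOf r (B \ A) ∧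
    ((∀ a ∈ A \ B, ∀ x ∈ A ∩ B, ∀ b ∈ B \ A, r a x ∧ r x b) ∨
     (∀ b ∈ B \ A, ∀ x ∈ A ∩ B, ∀ a ∈ A \ B, r b x ∧ r x a)) := by
  obtain ⟨hI, ⟨a0, ha0⟩, ⟨b0, hb0⟩⟩ := hAB
  have htot := hr.toTotal.total
  refine ⟨?_, sdiff_interval r hr A B hA hB b0 hb0,
    sdiff_interval r hr B A hB hA a0 ha0, ?_⟩
  · intro x y z hxy hyz hx hz
    obtain ⟨hxA, hxB⟩ := Finset.mem_inter.1 hx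
    obtain ⟨hzA, hzB⟩ := Finset.mem_inter.1 hz
    exact Finset.mem_inter.2 ⟨hA x y z hxy hyz hxA hzA, hB x y z hxy hyz hxB hzB⟩
  · rcases htot a0 b0 with h | h
    · exact Or.inl (key r hr A B hA hB a0 b0 ha0 hb0 h)
    · refine Or.inr ?_
      have := key r hr B A hB hA b0 a0 hb0 ha0 h
      intro b hb x hx a ha
      exact this b hb x (by rwa [Finset.inter_comm]) a ha
end

section
/- If R₁,…,R_k is a swap overlap order, then swapping each 'failing' pair yields an overlap order: there is a permutation σ of {1,…,k}, obtained by exchanging adjacent positions l, l+1 whenever R_l overlaps no earlier set, such that in the reordered sequence each set (after the first) overlaps some earlier set. -/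
theorem Overlaps.symm' {α : Type*} [DecidableEq α] {A B : Finset α}
    (h : Overlaps A B) : Overlaps B A :=
  ⟨by rw [Finset.inter_comm]; exact h.1, h.2.2, h.2.1⟩

/-- From a swap overlap order one obtains, by exchanging the failing adjacent
pairs, a reordering in which each set (after the first) overlaps an earlier set. -/
theorem stmt16 {α : Type*} [DecidableEq α] (k : ℕ) (R : ℕ → Finset α)
    (h : ∀ l, 1 ≤ l → l < k →
      (∃ g < l, Overlaps (R g) (R l)) ∨
      (l + 1 < k ∧ (∃ g < l, Overlaps (R g) (R (l + 1))) ∧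
        Overlaps (R l) (R (l + 1)))) :
    ∃ σ : Equiv.Perm (Fin k), ∀ j : Fin k, 0 < (j : ℕ) →
      ∃ i : Fin k, i < j ∧ Overlaps (R (σ i)) (R (σ j)) := by
  classical
  set F : ℕ → Prop := fun n => 1 ≤ n ∧ n < k ∧ ¬∃ g < n, Overlaps (R g) (R n) with hFdef
  have hA : ∀ n, F n → n + 1 < k ∧ (∃ g < n, Overlaps (R g) (R (n + 1))) ∧
      Overlaps (R n) (R (n + 1)) := by
    intro n hn
    rcases h n hn.1 hn.2.1 with h1 | h2
    · exact absurd h1 hn.2.2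
    · exact h2
  have hB : ∀ n, F n → ¬ F (n + 1) := by
    intro n hn hn1
    obtain ⟨-, ⟨g, hg, hov⟩, -⟩ := hA n hn
    exact hn1.2.2 ⟨g, Nat.lt_succ_of_lt hg, hov⟩
  set f : ℕ → ℕ := fun n => if F n then n + 1 else if F (n - 1) then n - 1 else n
    with hfdef
  have hf1 : ∀ n, F n → f n = n + 1 := by
    intro n h1; simp only [hfdef]; rw [if_pos h1]
  have hf2 : ∀ n, ¬ F n → F (n - 1) → f n = n - 1 := by
    intro n h1 h2; simp only [hfdef]; rw [if_neg h1, if_pos h2]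
  have hf3 : ∀ n, ¬ F n → ¬ F (n - 1) → f n = n := by
    intro n h1 h2; simp only [hfdef]; rw [if_neg h1, if_neg h2]
  have hf_lt : ∀ n, n < k → f n < k := by
    intro n hn
    by_cases h1 : F n
    · rw [hf1 n h1]; exact (hA n h1).1
    · by_cases h2 : F (n - 1)
      · rw [hf2 n h1 h2]; omega
      · rw [hf3 n h1 h2]; exact hn
  have hff : ∀ n, f (f n) = n := by
    intro n
    by_cases h1 : F n
    · have h2 : ¬ F (n + 1) := hB n h1
      rw [hf1 n h1]
      have h3 : F (n + 1 - 1) := by simpa using h1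
      rw [hf2 (n + 1) h2 h3]
      simp
    · by_cases h2 : F (n - 1)
      · have hn2 : 2 ≤ n := by have := h2.1; omega
        rw [hf2 n h1 h2, hf1 (n - 1) h2]
        omega
      · rw [hf3 n h1 h2, hf3 n h1 h2]
  have hgI : Function.Involutive (fun j : Fin k => (⟨f j, hf_lt j j.2⟩ : Fin k)) := by
    intro j; ext; simp [hff]
  refine ⟨hgI.toPerm _, ?_⟩
  intro j hj
  have hσ : ∀ i : Fin k, ((hgI.toPerm _ i : Fin k) : ℕ) = f i := fun i => rfl
  -- helper: for g < j, an index i < j with σ i = g, provided g+1 = j ∧ F g fails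
  have key : ∀ g : ℕ, g < (j : ℕ) → ¬ (F g ∧ g + 1 = (j : ℕ)) →
      ∃ i : Fin k, i < j ∧ ((hgI.toPerm _ i : Fin k) : ℕ) = g := by
    intro g hg hng
    have hgk : g < k := lt_trans hg j.2
    refine ⟨⟨f g, hf_lt g hgk⟩, ?_, ?_⟩
    · show f g < (j : ℕ)
      by_cases h1 : F g
      · rw [hf1 g h1]
        rcases Nat.lt_or_ge (g + 1) j with h' | h'
        · exact h'
        · exact absurd ⟨h1, by omega⟩ hng
      · by_cases h2 : F (g - 1)
        · rw [hf2 g h1 h2]; omega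
        · rw [hf3 g h1 h2]; exact hg
    · show f (f g) = g
      exact hff g
  by_cases h1 : F (j : ℕ)
  · -- σ j = j + 1; R (j+1) overlaps some R g, g < j
    obtain ⟨-, ⟨g, hg, hov⟩, -⟩ := hA (j : ℕ) h1
    obtain ⟨i, hi, hie⟩ := key g hg (by
      rintro ⟨hFg, hgj⟩
      exact hB g hFg (hgj ▸ h1))
    refine ⟨i, hi, ?_⟩
    rw [hie, hσ j, hf1 _ h1]
    exact hov
  · by_cases h2 : F ((j : ℕ) - 1)
    · -- σ j = j - 1; it overlaps R j which sits at position j - 1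
      have hj2 : 2 ≤ (j : ℕ) := by have := h2.1; omega
      have hjk : (j : ℕ) - 1 < k := by omega
      refine ⟨⟨(j : ℕ) - 1, hjk⟩, by simp [Fin.lt_def]; omega, ?_⟩
      have e1 : ((hgI.toPerm _ (⟨(j : ℕ) - 1, hjk⟩ : Fin k) : Fin k) : ℕ) = (j : ℕ) := by
        rw [hσ]; simp only []
        rw [hf1 _ h2]; omega
      rw [e1, hσ j, hf2 _ h1 h2]
      have := (hA _ h2).2.2
      have e2 : (j : ℕ) - 1 + 1 = (j : ℕ) := by omega
      rw [e2] at this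
      exact this.symm'
    · -- σ j = j; j is not failing, so it overlaps some earlier R g
      have hex : ∃ g < (j : ℕ), Overlaps (R g) (R (j : ℕ)) := by
        by_contra hc
        exact h1 ⟨hj, j.2, hc⟩
      obtain ⟨g, hg, hov⟩ := hex
      obtain ⟨i, hi, hie⟩ := key g hg (by
        rintro ⟨hFg, hgj⟩
        have : (j : ℕ) - 1 = g := by omega
        exact h2 (this ▸ hFg))
      refine ⟨i, hi, ?_⟩
      rw [hie, hσ j, hf3 _ h1 h2]
      exact hov
end

section
/- If the columns of a 0-1 matrix whose rows are sorted in decreasing size order are sorted lexicographically, then for every row R, the refinement process ordering claim holds: equal columns lie in the same part of the final partition obtained by successively refining the trivial partition by each row in decreasing size order, and the parts appear in lexicographic order of the columns. -/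
open List

/-- Refine an ordered partition (list of parts) by a set `S`: each part `P`
is replaced by `P \ S` followed by `P ∩ S`, dropping empty parts. -/
def refineStep {α : Type*} [DecidableEq α] (P : List (Finset α)) (S : Finset α) :
    List (Finset α) :=
  P.flatMap fun Q => [Q \ S, Q ∩ S].filter fun T => T.Nonempty

/-- The membership vector of a column `c`: its 0-1 row pattern, rows in LR order. -/
def colVec {α : Type*} [DecidableEq α] (m : ℕ) (R : Fin m → Finset α) (c : α) : Fin m → Bool :=
  fun i => decide (c ∈ R i)

/-- Strict lexicographic order on column vectors (with `false < true`). -/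
def LexLt {m : ℕ} (f g : Fin m → Bool) : Prop :=
  ∃ i : Fin m, (∀ j : Fin m, j < i → f j = g j) ∧ f i = false ∧ g i = true

namespace RefineAux

variable {α : Type*} [DecidableEq α]

/-- The membership vector along a list of rows. -/
def vecL (Rs : List (Finset α)) (c : α) : List Bool := Rs.map fun S => decide (c ∈ S)

/-- Lexicographic strict order on boolean lists. -/
def llt (a b : List Bool) : Prop :=
  ∃ n, a.take n = b.take n ∧ a[n]? = some false ∧ b[n]? = some true

lemma vecL_append (Rs : List (Finset α)) (S : Finset α) (c : α) :
    vecL (Rs ++ [S]) c = vecL Rs c ++ [decide (c ∈ S)] := by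
  simp [vecL]

lemma llt_ne {a b : List Bool} (h : llt a b) : a ≠ b := by
  obtain ⟨n, -, ha, hb⟩ := h
  intro he
  rw [he, hb] at ha
  simp at ha

lemma llt_append {a b : List Bool} (x y : Bool) (h : llt a b) : llt (a ++ [x]) (b ++ [y]) := by
  obtain ⟨n, ht, ha, hb⟩ := h
  have hna : n < a.length := by
    by_contra h'
    push_neg at h'
    rw [List.getElem?_eq_none h'] at ha
    exact absurd ha (by simp)
  have hnb : n < b.length := by
    by_contra h'
    push_neg at h'
    rw [List.getElem?_eq_none h'] at hb
    exact absurd hb (by simp)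
  refine ⟨n, ?_, ?_, ?_⟩
  · rw [List.take_append_of_le_length hna.le, List.take_append_of_le_length hnb.le, ht]
  · rw [List.getElem?_append, if_pos hna]; exact ha
  · rw [List.getElem?_append, if_pos hnb]; exact hb

lemma llt_append_of_eq {a b : List Bool} (h : a = b) :
    llt (a ++ [false]) (b ++ [true]) := by
  subst h
  refine ⟨a.length, by rw [List.take_left, List.take_left], ?_, ?_⟩
  · rw [List.getElem?_append, if_neg (lt_irrefl _)]
    simp
  · rw [List.getElem?_append, if_neg (lt_irrefl _)]
    simp

/-- Invariant maintained by the refinement process. -/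
def Inv (C : Finset α) (Rs L : List (Finset α)) : Prop :=
  (∀ P ∈ L, P ⊆ C) ∧
  (∀ c ∈ C, ∃ P ∈ L, c ∈ P) ∧
  (∀ P ∈ L, ∀ c ∈ P, ∀ d ∈ P, vecL Rs c = vecL Rs d) ∧
  L.Pairwise (fun P P' => ∀ c ∈ P, ∀ d ∈ P', llt (vecL Rs c) (vecL Rs d))

lemma mem_parts {Q S P : Finset α}
    (h : P ∈ ([Q \ S, Q ∩ S].filter fun T => T.Nonempty)) : P = Q \ S ∨ P = Q ∩ S := by
  have := (List.mem_filter.1 h).1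
  simpa using this

lemma parts_subset {Q S P : Finset α}
    (h : P ∈ ([Q \ S, Q ∩ S].filter fun T => T.Nonempty)) : P ⊆ Q := by
  rcases mem_parts h with rfl | rfl
  · exact Finset.sdiff_subset
  · exact Finset.inter_subset_left

lemma inv_step (C : Finset α) (Rs L : List (Finset α)) (S : Finset α)
    (h : Inv C Rs L) : Inv C (Rs ++ [S]) (refineStep L S) := by
  obtain ⟨h1, h2, h3, h4⟩ := h
  refine ⟨?_, ?_, ?_, ?_⟩
  · intro P hP
    obtain ⟨Q, hQ, hPQ⟩ := List.mem_flatMap.1 hP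
    exact (parts_subset hPQ).trans (h1 Q hQ)
  · intro c hc
    obtain ⟨Q, hQ, hcQ⟩ := h2 c hc
    by_cases hcS : c ∈ S
    · refine ⟨Q ∩ S, List.mem_flatMap.2 ⟨Q, hQ, ?_⟩, Finset.mem_inter.2 ⟨hcQ, hcS⟩⟩
      refine List.mem_filter.2 ⟨by simp, ?_⟩
      simpa using ⟨c, Finset.mem_inter.2 ⟨hcQ, hcS⟩⟩
    · refine ⟨Q \ S, List.mem_flatMap.2 ⟨Q, hQ, ?_⟩, Finset.mem_sdiff.2 ⟨hcQ, hcS⟩⟩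
      refine List.mem_filter.2 ⟨by simp, ?_⟩
      simpa using ⟨c, Finset.mem_sdiff.2 ⟨hcQ, hcS⟩⟩
  · intro P hP c hc d hd
    obtain ⟨Q, hQ, hPQ⟩ := List.mem_flatMap.1 hP
    have hsub := parts_subset hPQ
    have heq : vecL Rs c = vecL Rs d := h3 Q hQ c (hsub hc) d (hsub hd)
    rw [vecL_append, vecL_append, heq]
    rcases mem_parts hPQ with rfl | rfl
    · have : c ∉ S := (Finset.mem_sdiff.1 hc).2
      have : d ∉ S := (Finset.mem_sdiff.1 hd).2
      simp_all
    · have : c ∈ S := (Finset.mem_inter.1 hc).2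
      have : d ∈ S := (Finset.mem_inter.1 hd).2
      simp_all
  · rw [refineStep, List.flatMap_def]
    rw [List.pairwise_flatten]
    constructor
    · intro l hl
      obtain ⟨Q, hQ, rfl⟩ := List.mem_map.1 hl
      refine List.Pairwise.sublist List.filter_sublist ?_
      refine List.pairwise_cons.2 ⟨?_, List.pairwise_singleton _ _⟩
      intro P hP c hc d hd
      have hP' : P = Q ∩ S := by simpa using hP
      subst hP'
      have hcQ : c ∈ Q := (Finset.mem_sdiff.1 hc).1
      have hdQ : d ∈ Q := (Finset.mem_inter.1 hd).1
      have heq : vecL Rs c = vecL Rs d := h3 Q hQ c hcQ d hdQ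
      rw [vecL_append, vecL_append]
      have hc' : decide (c ∈ S) = false := by simp [(Finset.mem_sdiff.1 hc).2]
      have hd' : decide (d ∈ S) = true := by simp [(Finset.mem_inter.1 hd).2]
      rw [hc', hd']
      exact llt_append_of_eq heq
    · rw [List.pairwise_map]
      refine h4.imp ?_
      intro Q Q' hQQ' P hP P' hP' c hc d hd
      have h1' : c ∈ Q := parts_subset hP hc
      have h2' : d ∈ Q' := parts_subset hP' hd
      rw [vecL_append, vecL_append]
      exact llt_append _ _ (hQQ' c h1' d h2')

lemma inv_fold (C : Finset α) (Rs : List (Finset α)) :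
    Inv C Rs (Rs.foldl refineStep [C]) := by
  induction Rs using List.reverseRecOn with
  | nil =>
    refine ⟨?_, ?_, ?_, ?_⟩
    · intro P hP; simp at hP; subst hP; exact subset_rfl
    · intro c hc; exact ⟨C, by simp, hc⟩
    · intro P hP c hc d hd; simp [vecL]
    · simp
  | append_singleton Rs S ih =>
    rw [List.foldl_append]
    simpa using inv_step C Rs _ S ih

end RefineAux

open RefineAux in
/-- Refining the trivial partition of the columns by the rows taken in
decreasing size order yields the final partition in which two columns share a
part iff their column vectors are equal, and the parts are sorted in
lexicographic order of the column vectors. -/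
theorem stmt18 {α : Type*} [DecidableEq α] (C : Finset α) (m : ℕ)
    (R : Fin m → Finset α)
    (hsub : ∀ i, R i ⊆ C)
    (hdecr : ∀ i j : Fin m, i ≤ j → (R j).card ≤ (R i).card) :
    (∀ c ∈ C, ∀ d ∈ C,
      (colVec m R c = colVec m R d ↔
        ∃ P ∈ (List.ofFn R).foldl refineStep [C], c ∈ P ∧ d ∈ P)) ∧
    (∀ p q : ℕ, p < q →
      ∀ (hp : p < ((List.ofFn R).foldl refineStep [C]).length)
        (hq : q < ((List.ofFn R).foldl refineStep [C]).length),
      ∀ c ∈ ((List.ofFn R).foldl refineStep [C]).get ⟨p, hp⟩,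
      ∀ d ∈ ((List.ofFn R).foldl refineStep [C]).get ⟨q, hq⟩,
        LexLt (colVec m R c) (colVec m R d)) := by
  obtain ⟨h1, h2, h3, h4⟩ := inv_fold C (List.ofFn R)
  set L := (List.ofFn R).foldl refineStep [C] with hL
  have hvec : ∀ c : α, vecL (List.ofFn R) c = List.ofFn (colVec m R c) := by
    intro c
    rw [vecL, List.map_ofFn]
    rfl
  have hlex : ∀ c d : α, llt (vecL (List.ofFn R) c) (vecL (List.ofFn R) d) →
      LexLt (colVec m R c) (colVec m R d) := by
    intro c d h
    obtain ⟨n, ht, ha, hb⟩ := h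
    rw [hvec c] at ht ha
    rw [hvec d] at ht hb
    rw [List.getElem?_ofFn] at ha hb
    split at ha
    case isFalse => exact absurd ha (by simp)
    case isTrue hn =>
      rw [dif_pos hn] at hb
      refine ⟨⟨n, hn⟩, ?_, by simpa using ha, by simpa using hb⟩
      intro j hj
      have hjn : (j : ℕ) < n := hj
      have := congrArg (fun l => l[(j : ℕ)]?) ht
      simp only [List.getElem?_take_of_lt hjn] at this
      rw [List.getElem?_ofFn, List.getElem?_ofFn] at this
      rw [dif_pos j.isLt, dif_pos j.isLt] at this
      simpa using this
  constructor
  · intro c hc d hd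
    constructor
    · intro hcd
      have hveq : vecL (List.ofFn R) c = vecL (List.ofFn R) d := by
        rw [hvec, hvec, hcd]
      obtain ⟨P, hP, hcP⟩ := h2 c hc
      obtain ⟨P', hP', hdP⟩ := h2 d hd
      obtain ⟨p, hpP⟩ := List.get_of_mem hP
      obtain ⟨q, hqP⟩ := List.get_of_mem hP'
      rcases lt_trichotomy p q with hlt | heq | hgt
      · have := (List.pairwise_iff_get.1 h4) p q hlt c (by rw [hpP]; exact hcP) d
          (by rw [hqP]; exact hdP)
        exact absurd hveq (llt_ne this)
      · refine ⟨P, hP, hcP, ?_⟩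
        rw [← hpP, heq, hqP]; exact hdP
      · have := (List.pairwise_iff_get.1 h4) q p hgt d (by rw [hqP]; exact hdP) c
          (by rw [hpP]; exact hcP)
        exact absurd hveq.symm (llt_ne this)
    · rintro ⟨P, hP, hcP, hdP⟩
      have := h3 P hP c hcP d hdP
      rw [hvec, hvec] at this
      exact List.ofFn_inj.1 this
  · intro p q hpq hp hq c hc d hd
    have := (List.pairwise_iff_get.1 h4) ⟨p, hp⟩ ⟨q, hq⟩ hpq c hc d hd
    exact hlex c d this
end

section
/- Characterization of Max via column vectors: let rows be sorted in decreasing size (order LR) and regard each column c as the 0-1 vector of memberships. For a row R₁ with leftmost column l = left(R₁) and rightmost column r = right(R₁) in lexicographic column order, Max(R₁) ≠ ∅ (some earlier row overlaps R₁) if and only if there exists a row R with R ≤_LR R₁ in LR order such that c_l ∉ R and c_r ∈ R. -/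
lemma lexTrichotomy {m : ℕ} (f g : Fin m → Bool) : f = g ∨ LexLt f g ∨ LexLt g f := by
  by_cases h : f = g
  · exact Or.inl h
  right
  have hne : (Finset.univ.filter (fun i : Fin m => f i ≠ g i)).Nonempty := by
    by_contra hc
    rw [Finset.not_nonempty_iff_eq_empty, Finset.filter_eq_empty_iff] at hc
    exact h (funext fun i => not_not.mp (hc (Finset.mem_univ i)))
  set S := Finset.univ.filter (fun i : Fin m => f i ≠ g i) with hS
  obtain hiS := S.min'_mem hne
  set i := S.min' hne with hi
  have hdiff : f i ≠ g i := (Finset.mem_filter.mp hiS).2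
  have hpre : ∀ j, j < i → f j = g j := by
    intro j hj
    by_contra hne'
    exact absurd (S.min'_le j (Finset.mem_filter.mpr ⟨Finset.mem_univ j, hne'⟩)) (not_le.mpr hj)
  cases hf : f i with
  | false =>
    refine Or.inl ⟨i, hpre, hf, ?_⟩
    cases hg : g i
    · exact absurd (hf.trans hg.symm) hdiff
    · rfl
  | true =>
    refine Or.inr ⟨i, fun j hj => (hpre j hj).symm, ?_, hf⟩
    cases hg : g i
    · rfl
    · exact absurd (hf.trans hg.symm) hdiff

/-- Characterization of `Max`: with rows `R 0, …, R (m-1)` listed in the LR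
order (sizes non-increasing), and `l`/`r` a leftmost/rightmost column of the
row `R i₁` in the lexicographic order of column vectors, some row strictly
earlier in LR order overlaps `R i₁` iff some row `R j` with `j ≤ i₁` satisfies
`l ∉ R j` and `r ∈ R j`. -/
theorem stmt19 {α : Type*} [DecidableEq α] (m : ℕ) (R : Fin m → Finset α)
    (hdecr : ∀ i j : Fin m, i ≤ j → (R j).card ≤ (R i).card)
    (i₁ : Fin m) (l r : α)
    (hl : l ∈ R i₁ ∧ ∀ c ∈ R i₁, ¬ LexLt (colVec m R c) (colVec m R l))
    (hr : r ∈ R i₁ ∧ ∀ c ∈ R i₁, ¬ LexLt (colVec m R r) (colVec m R c)) :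
    (∃ j : Fin m, j < i₁ ∧ Overlaps (R j) (R i₁)) ↔
    (∃ j : Fin m, j ≤ i₁ ∧ l ∉ R j ∧ r ∈ R j) := by
  constructor
  · rintro ⟨j, hjlt, hov⟩
    by_contra hc
    push_neg at hc
    -- hc : ∀ j ≤ i₁, l ∉ R j → r ∉ R j
    have key : ∀ k : Fin m, k ≤ i₁ → colVec m R l k = colVec m R r k := by
      rcases lexTrichotomy (colVec m R l) (colVec m R r) with heq | hlt | hgt
      · intro k _; exact congrFun heq k
      · obtain ⟨i, hprei, hfi, hgi⟩ := hlt
        have hii : i₁ < i := by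
          by_contra hle
          push_neg at hle
          have hlni : l ∉ R i := by simpa [colVec] using hfi
          have hrni : r ∈ R i := by simpa [colVec] using hgi
          exact (hc i hle hlni) hrni
        intro k hk
        exact hprei k (lt_of_le_of_lt hk hii)
      · exact absurd hgt (hr.2 l hl.1)
    have key2 : ∀ c ∈ R i₁, ∀ k : Fin m, k ≤ i₁ → colVec m R c k = colVec m R l k := by
      intro c hcm
      rcases lexTrichotomy (colVec m R c) (colVec m R l) with heq | hlt | hgt
      · intro k _; exact congrFun heq k
      · exact absurd hlt (hl.2 c hcm)
      · obtain ⟨i, hprei, hfi, hgi⟩ := hgt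
        intro k hk
        rcases le_or_gt i i₁ with hile | hilt
        · exfalso
          apply hr.2 c hcm
          refine ⟨i, ?_, ?_, hgi⟩
          · intro j hj
            exact ((key j (le_of_lt (lt_of_lt_of_le hj hile))).symm).trans (hprei j hj)
          · exact (key i hile).symm.trans hfi
        · exact (hprei k (lt_of_le_of_lt hk hilt)).symm
    obtain ⟨⟨x, hx⟩, _, ⟨y, hy⟩⟩ := hov
    rw [Finset.mem_inter] at hx
    rw [Finset.mem_sdiff] at hy
    have h1 := key2 x hx.2 j (le_of_lt hjlt)
    have h2 := key2 y hy.1 j (le_of_lt hjlt)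
    rw [← h2] at h1
    simp only [colVec, decide_eq_decide] at h1
    exact hy.2 (h1.mp hx.1)
  · rintro ⟨j, hj, hlj, hrj⟩
    have hjlt : j < i₁ := lt_of_le_of_ne hj (by rintro rfl; exact hlj hl.1)
    refine ⟨j, hjlt, ⟨r, Finset.mem_inter.mpr ⟨hrj, hr.1⟩⟩, ?_, ⟨l, Finset.mem_sdiff.mpr ⟨hl.1, hlj⟩⟩⟩
    by_contra hne
    rw [Finset.not_nonempty_iff_eq_empty, Finset.sdiff_eq_empty_iff_subset] at hne
    have hcard := hdecr j i₁ hj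
    have : R j = R i₁ := Finset.eq_of_subset_of_card_le hne hcard
    exact hlj (this ▸ hl.1)
end
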